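/- arXiv:2009.09142 — 2 statements merged into one kernel-verified Lean document; each statement's English description precedes it below -/
import Mathlib

section
/- Let Λ ∈ ℂ^{n×n} be Hermitian positive semidefinite and U ∈ ℂ^{n×r} with U^H U = I_r. For every i = 1,…,n, the i-th largest eigenvalue satisfies λ_i( Λ^{1/2} U (I + U^H Λ U)^{-1} U^H Λ^{1/2} ) ≤ λ_i( Λ (I + Λ)^{-1} ). -/
open Matrix
open scoped ComplexOrder

/-- The `i`-th largest eigenvalue of a Hermitian matrix (`0` if the matrix is not Hermitian):
the eigenvalues are sorted in increasing order and read off from the end. -/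
noncomputable def sortedEigenvalue {n : ℕ} (A : Matrix (Fin n) (Fin n) ℂ) (i : Fin n) : ℝ :=
  if hA : A.IsHermitian then
    ((Finset.univ.val.map hA.eigenvalues).sort (· ≤ ·)).getD (n - 1 - (i : ℕ)) 0
  else 0

/-- The square root of a positive semidefinite matrix, as defined in the older Mathlib
(removed since): `U * diagonal (√ eigenvalues) * Uᴴ` with `U` the eigenvector unitary. -/
noncomputable def Matrix.PosSemidef.sqrt {n : Type*} [Fintype n] [DecidableEq n] {𝕜 : Type*}
    [RCLike 𝕜] {A : Matrix n n 𝕜} (hA : A.PosSemidef) : Matrix n n 𝕜 :=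
  hA.1.eigenvectorUnitary.1 * diagonal ((↑) ∘ (√·) ∘ hA.1.eigenvalues) *
    (star hA.1.eigenvectorUnitary : Matrix n n 𝕜)

lemma Matrix.PosSemidef.posSemidef_sqrt {n : Type*} [Fintype n] [DecidableEq n] {𝕜 : Type*}
    [RCLike 𝕜] {A : Matrix n n 𝕜} (hA : A.PosSemidef) : hA.sqrt.PosSemidef := by
  unfold Matrix.PosSemidef.sqrt
  apply PosSemidef.mul_mul_conjTranspose_same
  refine posSemidef_diagonal_iff.mpr fun i ↦ ?_
  rw [Function.comp_apply, RCLike.nonneg_iff]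
  constructor
  · simp only [Function.comp_apply, RCLike.ofReal_re]; exact Real.sqrt_nonneg _
  · simp only [Function.comp_apply, RCLike.ofReal_im]

lemma Matrix.PosSemidef.sqrt_mul_self {n : Type*} [Fintype n] [DecidableEq n] {𝕜 : Type*}
    [RCLike 𝕜] {A : Matrix n n 𝕜} (hA : A.PosSemidef) : hA.sqrt * hA.sqrt = A := by
  let C : Matrix n n 𝕜 := hA.1.eigenvectorUnitary
  let E := diagonal ((↑) ∘ Real.sqrt ∘ hA.1.eigenvalues : n → 𝕜)
  suffices C * (E * (star C * C) * E) * star C = A by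
    change (C * E * star C) * (C * E * star C) = A
    simpa only [← Matrix.mul_assoc] using this
  have : star C * C = 1 := by simp [C]
  rw [this, Matrix.mul_one]
  have : E * E = diagonal ((↑) ∘ hA.1.eigenvalues) := by
    rw [diagonal_mul_diagonal]
    congr! with v
    simp [← pow_two, ← RCLike.ofReal_pow, Real.sq_sqrt (hA.eigenvalues_nonneg v)]
  rw [this]
  conv_rhs => rw [hA.1.spectral_theorem]
  simp [C]

section Aux

open scoped InnerProductSpace

variable {n r : ℕ}

lemma aux_quad_repr {A : Matrix (Fin n) (Fin n) ℂ} (hA : A.IsHermitian)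
    (x : EuclideanSpace ℂ (Fin n)) :
    ⟪x, Matrix.toEuclideanLin A x⟫_ℂ =
      ∑ k, (hA.eigenvalues k : ℂ) * (‖hA.eigenvectorBasis.repr x k‖ : ℂ) ^ 2 := by
  set b := hA.eigenvectorBasis with hb
  have hkey : ∀ k, Matrix.toEuclideanLin A (b k) = (hA.eigenvalues k : ℂ) • b k := by
    intro k
    have := hA.mulVec_eigenvectorBasis k
    apply (WithLp.equiv 2 (Fin n → ℂ)).injective
    simpa [Matrix.ofLp_toEuclideanLin_apply] using this
  have hTx : Matrix.toEuclideanLin A x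
      = ∑ k, (b.repr x k * (hA.eigenvalues k : ℂ)) • b k := by
    conv_lhs => rw [← b.sum_repr x]
    rw [map_sum]
    congr 1; ext k
    rw [_root_.map_smul, hkey, smul_smul]
  rw [hTx, inner_sum]
  congr 1; ext k
  rw [inner_smul_right, ← inner_conj_symm, b.repr_apply_apply]
  rw [mul_comm ⟪b k, x⟫_ℂ, mul_assoc, RCLike.mul_conj]
  rfl

lemma aux_repr_eq_zero_of_mem_span (b : OrthonormalBasis (Fin n) ℂ (EuclideanSpace ℂ (Fin n)))
    (K : Set (Fin n)) {x : EuclideanSpace ℂ (Fin n)}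
    (hx : x ∈ Submodule.span ℂ (⇑b '' K)) {i : Fin n} (hi : i ∉ K) :
    b.repr x i = 0 := by
  rw [b.repr_apply_apply]
  induction hx using Submodule.span_induction with
  | mem y hy =>
    obtain ⟨k, hk, rfl⟩ := hy
    exact b.orthonormal.2 (fun h => hi (h ▸ hk))
  | zero => simp
  | add y z _ _ hy hz => simp [inner_add_right, hy, hz]
  | smul c y _ hy => simp [inner_smul_right, hy]

lemma aux_sum_sq_repr (b : OrthonormalBasis (Fin n) ℂ (EuclideanSpace ℂ (Fin n)))
    (x : EuclideanSpace ℂ (Fin n)) :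
    ∑ k, ‖b.repr x k‖ ^ 2 = ‖x‖ ^ 2 := by
  have h : ‖b.repr x‖ = ‖x‖ := b.repr.norm_map x
  rw [← h, EuclideanSpace.norm_eq, Real.sq_sqrt (by positivity)]

lemma aux_finrank_span_perm_image (b : OrthonormalBasis (Fin n) ℂ (EuclideanSpace ℂ (Fin n)))
    (σ : Equiv.Perm (Fin n)) (K : Set (Fin n)) [Fintype K] :
    Module.finrank ℂ (Submodule.span ℂ (⇑b '' (⇑σ '' K))) = Fintype.card K := by
  rw [Set.image_image, Set.image_eq_range]
  have hinj : Function.Injective (fun k : K => σ ↑k) :=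
    σ.injective.comp Subtype.val_injective
  have hli : LinearIndependent ℂ (fun k : K => b (σ ↑k)) :=
    (b.orthonormal.comp _ hinj).linearIndependent
  exact finrank_span_eq_card hli

lemma aux_weyl_sorted {A B : Matrix (Fin n) (Fin n) ℂ} (hA : A.IsHermitian) (hB : B.IsHermitian)
    (hAB : (B - A).PosSemidef) (j : Fin n) :
    hA.eigenvalues (Tuple.sort hA.eigenvalues j) ≤ hB.eigenvalues (Tuple.sort hB.eigenvalues j) := by
  set σA := Tuple.sort hA.eigenvalues with hσA
  set σB := Tuple.sort hB.eigenvalues with hσB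
  set bA := hA.eigenvectorBasis with hbA
  set bB := hB.eigenvectorBasis with hbB
  set S : Submodule ℂ (EuclideanSpace ℂ (Fin n)) :=
    Submodule.span ℂ (⇑bA '' (⇑σA '' Set.Ici j)) with hS
  set T : Submodule ℂ (EuclideanSpace ℂ (Fin n)) :=
    Submodule.span ℂ (⇑bB '' (⇑σB '' Set.Iic j)) with hT
  have hSrank : Module.finrank ℂ S = n - (j : ℕ) := by
    rw [hS, aux_finrank_span_perm_image]
    simp
  have hTrank : Module.finrank ℂ T = (j : ℕ) + 1 := by
    rw [hT, aux_finrank_span_perm_image]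
    simp
  have hsup : Module.finrank ℂ ↥(S ⊔ T) ≤ n :=
    (Submodule.finrank_le _).trans (by simp)
  have hdim := Submodule.finrank_sup_add_finrank_inf_eq S T
  have hinf : S ⊓ T ≠ ⊥ := by
    intro h
    rw [h, finrank_bot] at hdim
    have := j.isLt
    omega
  obtain ⟨x, hx, hx0⟩ := Submodule.exists_mem_ne_zero_of_ne_bot hinf
  rw [Submodule.mem_inf] at hx
  obtain ⟨hxS, hxT⟩ := hx
  have hAzero : ∀ k : Fin n, ¬ j ≤ k → bA.repr x (σA k) = 0 := by
    intro k hk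
    refine aux_repr_eq_zero_of_mem_span bA _ hxS ?_
    rintro ⟨m, hm, he⟩
    exact hk (σA.injective he ▸ hm)
  have hBzero : ∀ k : Fin n, ¬ k ≤ j → bB.repr x (σB k) = 0 := by
    intro k hk
    refine aux_repr_eq_zero_of_mem_span bB _ hxT ?_
    rintro ⟨m, hm, he⟩
    exact hk (σB.injective he ▸ hm)
  set α : Fin n → ℝ := hA.eigenvalues ∘ σA with hα
  set β : Fin n → ℝ := hB.eigenvalues ∘ σB with hβ
  have estA : α j * ‖x‖ ^ 2 ≤ ∑ i, hA.eigenvalues i * ‖bA.repr x i‖ ^ 2 := by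
    rw [← Equiv.sum_comp σA (fun i => hA.eigenvalues i * ‖bA.repr x i‖ ^ 2),
      ← aux_sum_sq_repr bA x, ← Equiv.sum_comp σA (fun i => ‖bA.repr x i‖ ^ 2), Finset.mul_sum]
    refine Finset.sum_le_sum fun k _ => ?_
    by_cases hk : j ≤ k
    · exact mul_le_mul_of_nonneg_right (Tuple.monotone_sort hA.eigenvalues hk) (sq_nonneg _)
    · rw [hAzero k hk]; simp
  have estB : ∑ i, hB.eigenvalues i * ‖bB.repr x i‖ ^ 2 ≤ β j * ‖x‖ ^ 2 := by
    rw [← Equiv.sum_comp σB (fun i => hB.eigenvalues i * ‖bB.repr x i‖ ^ 2),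
      ← aux_sum_sq_repr bB x, ← Equiv.sum_comp σB (fun i => ‖bB.repr x i‖ ^ 2), Finset.mul_sum]
    refine Finset.sum_le_sum fun k _ => ?_
    by_cases hk : k ≤ j
    · exact mul_le_mul_of_nonneg_right (Tuple.monotone_sort hB.eigenvalues hk) (sq_nonneg _)
    · rw [hBzero k hk]; simp
  have hmid : ∑ i, hA.eigenvalues i * ‖bA.repr x i‖ ^ 2
      ≤ ∑ i, hB.eigenvalues i * ‖bB.repr x i‖ ^ 2 := by
    have h1 := aux_quad_repr hA x
    have h2 := aux_quad_repr hB x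
    have hps := hAB.dotProduct_mulVec_nonneg (WithLp.equiv 2 (Fin n → ℂ) x)
    have hsub : ⟪x, Matrix.toEuclideanLin B x⟫_ℂ - ⟪x, Matrix.toEuclideanLin A x⟫_ℂ
        = star (WithLp.equiv 2 (Fin n → ℂ) x) ⬝ᵥ ((B - A) *ᵥ WithLp.equiv 2 (Fin n → ℂ) x) := by
      rw [Matrix.sub_mulVec, dotProduct_sub]
      rw [dotProduct_comm, dotProduct_comm (star _)]
      rfl
    have hle : ⟪x, Matrix.toEuclideanLin A x⟫_ℂ ≤ ⟪x, Matrix.toEuclideanLin B x⟫_ℂ := by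
      rw [← sub_nonneg, hsub]; exact hps
    rw [h1, h2] at hle
    have hle' : ((∑ i, hA.eigenvalues i * ‖bA.repr x i‖ ^ 2 : ℝ) : ℂ)
        ≤ ((∑ i, hB.eigenvalues i * ‖bB.repr x i‖ ^ 2 : ℝ) : ℂ) := by
      push_cast
      convert hle using 2
    exact_mod_cast hle'
  have hN : 0 < ‖x‖ ^ 2 := by
    have h : ‖x‖ ≠ 0 := fun h => hx0 (norm_eq_zero.mp h)
    positivity
  have hfin := (estA.trans hmid).trans estB
  exact le_of_mul_le_mul_right hfin hN

lemma aux_sortedList_eq (f : Fin n → ℝ) :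
    ((Finset.univ.val.map f).sort (· ≤ ·)) = List.ofFn (f ∘ Tuple.sort f) := by
  apply List.Perm.eq_of_sortedLE (List.Pairwise.sortedLE (Multiset.pairwise_sort _ _))
    ((Tuple.monotone_sort f).sortedLE_ofFn) (Multiset.coe_eq_coe.mp ?_)
  rw [Multiset.sort_eq, List.ofFn_eq_map, ← Multiset.map_coe]
  have h1 : (↑(List.finRange n) : Multiset (Fin n)) = Finset.univ.val := rfl
  rw [h1, ← Multiset.map_map]
  congr 1
  have h2 := congrArg Finset.val (Finset.map_univ_equiv (Tuple.sort f))
  simpa [Finset.map] using h2.symm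

lemma aux_sortedEigenvalue_eq {A : Matrix (Fin n) (Fin n) ℂ} (hA : A.IsHermitian)
    (i : Fin n) :
    sortedEigenvalue A i =
      hA.eigenvalues (Tuple.sort hA.eigenvalues ⟨n - 1 - (i : ℕ), by omega⟩) := by
  rw [sortedEigenvalue, dif_pos hA, aux_sortedList_eq]
  have hlt : n - 1 - (i : ℕ) < (List.ofFn (hA.eigenvalues ∘ Tuple.sort hA.eigenvalues)).length := by
    rw [List.length_ofFn]; omega
  rw [List.getD_eq_getElem _ _ hlt, List.getElem_ofFn]
  rfl

lemma aux_weyl {A B : Matrix (Fin n) (Fin n) ℂ} (hA : A.IsHermitian) (hB : B.IsHermitian)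
    (hAB : (B - A).PosSemidef) (i : Fin n) :
    sortedEigenvalue A i ≤ sortedEigenvalue B i := by
  rw [aux_sortedEigenvalue_eq hA i, aux_sortedEigenvalue_eq hB i]
  exact aux_weyl_sorted hA hB hAB _

lemma aux_posDef_conj {A : Matrix (Fin n) (Fin n) ℂ} (hA : A.PosDef)
    (U : Matrix (Fin n) (Fin r) ℂ) (hU : Uᴴ * U = 1) : (Uᴴ * A * U).PosDef := by
  refine PosDef.of_dotProduct_mulVec_pos (isHermitian_conjTranspose_mul_mul U hA.isHermitian) fun x hx => ?_
  have hx' : U *ᵥ x ≠ 0 := by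
    intro h
    apply hx
    have h2 : Uᴴ *ᵥ (U *ᵥ x) = x := by rw [mulVec_mulVec, hU, one_mulVec]
    rw [h, mulVec_zero] at h2
    exact h2.symm
  have hpos := hA.dotProduct_mulVec_pos hx'
  have heq : star (U *ᵥ x) ⬝ᵥ (A *ᵥ (U *ᵥ x)) = star x ⬝ᵥ ((Uᴴ * A * U) *ᵥ x) := by
    simp [star_mulVec, dotProduct_mulVec, Matrix.vecMul_vecMul, Matrix.mul_assoc]
  rwa [heq] at hpos

lemma aux_key_psd {A : Matrix (Fin n) (Fin n) ℂ} (hA : A.PosDef)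
    (U : Matrix (Fin n) (Fin r) ℂ) (hU : Uᴴ * U = 1) :
    (A⁻¹ - U * (Uᴴ * A * U)⁻¹ * Uᴴ).PosSemidef := by
  classical
  set G := Uᴴ * A * U with hGdef
  have hG : G.PosDef := aux_posDef_conj hA U hU
  have hGdet : IsUnit G.det := hG.det_pos.ne'.isUnit
  set R := hA.posSemidef.sqrt with hRdef
  have hRH : Rᴴ = R := hA.posSemidef.posSemidef_sqrt.isHermitian
  have hRR : R * R = A := hA.posSemidef.sqrt_mul_self
  have hRdet : IsUnit R.det := by
    have h : IsUnit (R.det * R.det) := by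
      rw [← det_mul, hRR]; exact hA.det_pos.ne'.isUnit
    exact isUnit_of_mul_isUnit_left h
  set W := R * U with hWdef
  have hWW : Wᴴ * W = G := by
    rw [hWdef, conjTranspose_mul, hRH, hGdef, ← hRR]
    simp only [Matrix.mul_assoc]
  set P := W * G⁻¹ * Wᴴ with hPdef
  have hPH : Pᴴ = P := by
    rw [hPdef]
    simp only [conjTranspose_mul, conjTranspose_conjTranspose, conjTranspose_nonsing_inv,
      hG.isHermitian.eq, Matrix.mul_assoc]
  have hPP : P * P = P := by
    rw [hPdef]
    calc W * G⁻¹ * Wᴴ * (W * G⁻¹ * Wᴴ)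
        = W * G⁻¹ * (Wᴴ * W) * (G⁻¹ * Wᴴ) := by simp only [Matrix.mul_assoc]
      _ = W * (G⁻¹ * G) * (G⁻¹ * Wᴴ) := by rw [hWW]; simp only [Matrix.mul_assoc]
      _ = W * G⁻¹ * Wᴴ := by
          rw [nonsing_inv_mul _ hGdet, Matrix.mul_one]
          simp only [Matrix.mul_assoc]
  have hQ : (1 - P).PosSemidef := by
    have h2 : (1 - P)ᴴ * (1 - P) = 1 - P := by
      rw [conjTranspose_sub, conjTranspose_one, hPH, sub_mul, mul_sub, mul_sub, hPP,
        Matrix.mul_one, Matrix.one_mul]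
      simp
    have h3 := posSemidef_conjTranspose_mul_self (1 - P)
    rwa [h2] at h3
  have hconj := hQ.mul_mul_conjTranspose_same R⁻¹
  have hinvH : R⁻¹ᴴ = R⁻¹ := by rw [conjTranspose_nonsing_inv, hRH]
  rw [hinvH] at hconj
  have heq : R⁻¹ * (1 - P) * R⁻¹ = A⁻¹ - U * G⁻¹ * Uᴴ := by
    rw [mul_sub, sub_mul, Matrix.mul_one]
    refine congrArg₂ HSub.hSub ?_ ?_
    · rw [← hRR, Matrix.mul_inv_rev]
    · rw [hPdef, hWdef, conjTranspose_mul, hRH]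
      simp only [Matrix.mul_assoc]
      rw [nonsing_inv_mul_cancel_left _ _ hRdet, mul_nonsing_inv _ hRdet, Matrix.mul_one]
  rwa [heq] at hconj

end Aux

set_option maxHeartbeats 1000000 in
/-- For `Λ ⪰ 0` and `U` with orthonormal columns, each sorted eigenvalue of
`Λ^{1/2} U (I + UᴴΛU)⁻¹ Uᴴ Λ^{1/2}` is bounded by the corresponding sorted eigenvalue
of `Λ (I + Λ)⁻¹`. -/
theorem stmt_8 (n r : ℕ) (Λ : Matrix (Fin n) (Fin n) ℂ) (hΛ : Λ.PosSemidef)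
    (U : Matrix (Fin n) (Fin r) ℂ) (hU : Uᴴ * U = 1) (i : Fin n) :
    sortedEigenvalue (hΛ.sqrt * U * (1 + Uᴴ * Λ * U)⁻¹ * Uᴴ * hΛ.sqrt) i ≤
      sortedEigenvalue (Λ * (1 + Λ)⁻¹) i := by
  classical
  set S := hΛ.sqrt with hSdef
  have hSH : Sᴴ = S := hΛ.posSemidef_sqrt.isHermitian
  have hSS : S * S = Λ := hΛ.sqrt_mul_self
  set A := 1 + Λ with hAdef
  have hA : A.PosDef := Matrix.PosDef.one.add_posSemidef hΛ
  have hAdet : IsUnit A.det := hA.det_pos.ne'.isUnit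
  have hGid : 1 + Uᴴ * Λ * U = Uᴴ * A * U := by
    rw [hAdef, Matrix.mul_add, Matrix.mul_one, Matrix.add_mul, hU]
  have hSA : S * A = A * S := by
    rw [hAdef, ← hSS]
    noncomm_ring
  have hScomm : S * A⁻¹ = A⁻¹ * S := by
    have h1 : (S * A) * A⁻¹ = S := Matrix.mul_nonsing_inv_cancel_right _ _ hAdet
    have h2 : A⁻¹ * (A * S) = S := Matrix.nonsing_inv_mul_cancel_left _ _ hAdet
    calc S * A⁻¹ = (A⁻¹ * (A * S)) * A⁻¹ := by rw [h2]
      _ = A⁻¹ * ((S * A) * A⁻¹) := by rw [← hSA]; simp only [Matrix.mul_assoc]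
      _ = A⁻¹ * S := by rw [h1]
  have hNeq : Λ * A⁻¹ = S * A⁻¹ * S := by
    conv_lhs => rw [← hSS, Matrix.mul_assoc, hScomm, ← Matrix.mul_assoc]
  set G := Uᴴ * A * U with hGdef
  have hGH : Gᴴ = G := isHermitian_conjTranspose_mul_mul U hA.isHermitian
  set M := S * U * (1 + Uᴴ * Λ * U)⁻¹ * Uᴴ * S with hMdef
  have hMeq : M = S * U * G⁻¹ * Uᴴ * S := by rw [hMdef, hGid]
  have hMH : M.IsHermitian := by
    show Mᴴ = M
    rw [hMeq]
    simp only [conjTranspose_mul, conjTranspose_conjTranspose, conjTranspose_nonsing_inv,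
      hSH, hGH, Matrix.mul_assoc]
  have hNH : (Λ * A⁻¹).IsHermitian := by
    show (Λ * A⁻¹)ᴴ = Λ * A⁻¹
    rw [hNeq]
    simp only [conjTranspose_mul, conjTranspose_nonsing_inv, hSH, hA.isHermitian.eq,
      Matrix.mul_assoc]
  have hD := aux_key_psd hA U hU
  have hconj := hD.mul_mul_conjTranspose_same S
  rw [hSH] at hconj
  have hsubeq : S * (A⁻¹ - U * (Uᴴ * A * U)⁻¹ * Uᴴ) * S = Λ * A⁻¹ - M := by
    rw [Matrix.mul_sub, Matrix.sub_mul, hNeq, hMeq, ← hGdef]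
    refine congrArg₂ HSub.hSub rfl ?_
    simp only [Matrix.mul_assoc]
  rw [hsubeq] at hconj
  exact aux_weyl hMH hNH hconj i
end

section
/- For fixed σ² > 0, the function ρ ↦ R₁(ρ, σ²) = log[ ((1+σ²)² − ρ²)² / ( (1+σ²)(σ⁶+3σ⁴−2σ²ρ²+2σ²) ) ] is monotonically decreasing on [0,1] and monotonically increasing on [−1,0]; hence its maximum over ρ ∈ [−1,1] is attained at ρ = 0, where R₁(0,σ²) = log[ (1+σ²)² / (σ²(2+σ²)) ], and its minimum is attained at ρ = ±1, where R₁(±1,σ²) = log[ (2+σ²)² / (3 + 4σ² + σ⁴) ]. -/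
/-- The one-beam secret key rate as a function of the cross-correlation `ρ`
(noise variance `s = σ²`). -/
noncomputable def R1 (s ρ : ℝ) : ℝ :=
  Real.log (((1 + s) ^ 2 - ρ ^ 2) ^ 2 /
    ((1 + s) * (s ^ 3 + 3 * s ^ 2 - 2 * s * ρ ^ 2 + 2 * s)))

/-- Key monotonicity lemma: `R1` depends on `ρ` only through `ρ²` and is
decreasing in `ρ²` on `[0,1]`. -/
lemma R1_key (s : ℝ) (hs : 0 < s) (x y : ℝ) (h1 : x ^ 2 ≤ y ^ 2) (h2 : y ^ 2 ≤ 1) :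
    R1 s y ≤ R1 s x := by
  set t := x ^ 2 with ht
  set u := y ^ 2 with hu
  have hx2 : t ≤ 1 := h1.trans h2
  have hx0 : 0 ≤ t := sq_nonneg x
  have hy0 : 0 ≤ u := sq_nonneg y
  have hdx : 0 < (1 + s) * (s ^ 3 + 3 * s ^ 2 - 2 * s * t + 2 * s) := by nlinarith
  have hdy : 0 < (1 + s) * (s ^ 3 + 3 * s ^ 2 - 2 * s * u + 2 * s) := by nlinarith
  have hny : 0 < ((1 + s) ^ 2 - u) ^ 2 := by nlinarith
  have hQ : 0 ≤ (1 + s) ^ 2 + (1 + s) - 2 * u := by nlinarith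
  have hAu : 0 ≤ (1 + s) ^ 2 - u := by nlinarith
  have hA1u : 0 ≤ (1 + s) - u := by nlinarith
  have hB : 0 ≤ (2 * (1 + s) ^ 2 - t - u) * ((1 + s) ^ 2 + (1 + s) - 2 * u)
      - 2 * ((1 + s) ^ 2 - u) ^ 2 := by
    nlinarith [mul_nonneg (sub_nonneg.2 h1) hQ, mul_nonneg hAu hA1u]
  unfold R1
  apply Real.log_le_log (by positivity)
  rw [div_le_div_iff₀ hdy hdx]
  simp only [← ht, ← hu]
  nlinarith [mul_nonneg (mul_nonneg (mul_nonneg (by linarith : (0:ℝ) ≤ 1 + s) hs.le)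
    (sub_nonneg.2 h1)) hB]

/-- For fixed `σ² > 0`, `ρ ↦ R₁(ρ,σ²)` decreases on `[0,1]`, increases on `[−1,0]`;
its maximum over `[−1,1]` is at `ρ = 0` with value `log[(1+σ²)²/(σ²(2+σ²))]` and its minimum
is at `ρ = ±1` with value `log[(2+σ²)²/(3+4σ²+σ⁴)]`. -/
theorem stmt_12 (s : ℝ) (hs : 0 < s) :
    AntitoneOn (fun ρ => R1 s ρ) (Set.Icc 0 1) ∧
    MonotoneOn (fun ρ => R1 s ρ) (Set.Icc (-1) 0) ∧
    (∀ ρ ∈ Set.Icc (-1 : ℝ) 1, R1 s ρ ≤ R1 s 0) ∧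
    R1 s 0 = Real.log ((1 + s) ^ 2 / (s * (2 + s))) ∧
    (∀ ρ ∈ Set.Icc (-1 : ℝ) 1, R1 s 1 ≤ R1 s ρ) ∧
    R1 s 1 = Real.log ((2 + s) ^ 2 / (3 + 4 * s + s ^ 2)) ∧
    R1 s (-1) = R1 s 1 := by
  refine ⟨?_, ?_, ?_, ?_, ?_, ?_, ?_⟩
  · intro a ha b hb hab
    exact R1_key s hs a b (by nlinarith [ha.1, hb.2]) (by nlinarith [hb.1, hb.2])
  · intro a ha b hb hab
    exact R1_key s hs b a (by nlinarith [ha.1, hb.2]) (by nlinarith [ha.1, ha.2])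
  · intro ρ hρ
    exact R1_key s hs 0 ρ (by simpa using sq_nonneg ρ) (by nlinarith [hρ.1, hρ.2])
  · unfold R1
    congr 1
    have h1 : (1 : ℝ) + s ≠ 0 := by positivity
    have h2 : s ≠ 0 := hs.ne'
    have h3 : s ^ 3 + 3 * s ^ 2 - 2 * s * 0 ^ 2 + 2 * s ≠ 0 := by nlinarith
    rw [div_eq_div_iff (mul_ne_zero h1 h3) (by positivity)]
    ring
  · intro ρ hρ
    exact R1_key s hs ρ 1 (by nlinarith [hρ.1, hρ.2]) (by norm_num)
  · unfold R1
    congr 1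
    have h1 : (1 : ℝ) + s ≠ 0 := by positivity
    have h2 : s ≠ 0 := hs.ne'
    have h3 : (3 : ℝ) + 4 * s + s ^ 2 ≠ 0 := by positivity
    have h4 : s ^ 3 + 3 * s ^ 2 - 2 * s * 1 ^ 2 + 2 * s ≠ 0 := by nlinarith
    field_simp
    ring
  · unfold R1; norm_num
end
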